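/- Let $h$ be proper closed convex, $\alpha_k > 0$, $x_k \in \mathbb{R}^n$, and let $g_k$ be a square-integrable random vector with $\mathbb{E}_k[g_k] = \nabla f(x_k)$. Define $x_{k+1} = \mathrm{prox}_{\alpha_k h}(x_k - \alpha_k g_k)$ and $\hat{x}_{k+1} = \mathrm{prox}_{\alpha_k h}(x_k - \alpha_k \nabla f(x_k))$. Then $\mathbb{E}_k[(\nabla f(x_k) - g_k)^T(x_{k+1} - x_k)] \le \alpha_k \, \mathbb{E}_k[\|\nabla f(x_k) - g_k\|^2]$. -/

import Mathlib

open MeasureTheory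
open scoped RealInnerProductSpace

section Prox
variable {E : Type*} [NormedAddCommGroup E] [InnerProductSpace ℝ E]

lemma prox_variational {h : E → ℝ} (hconvh : ConvexOn ℝ Set.univ h)
    {α : ℝ} (hα : 0 < α) {prox : E → E}
    (hprox : ∀ z x, h (prox z) + 1 / (2 * α) * ‖prox z - z‖ ^ 2
      ≤ h x + 1 / (2 * α) * ‖x - z‖ ^ 2) (z x : E) :
    ⟪z - prox z, x - prox z⟫ ≤ α * (h x - h (prox z)) := by
  obtain ⟨p, hp⟩ : ∃ p, prox z = p := ⟨_, rfl⟩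
  rw [hp]
  have key : ∀ t : ℝ, 0 < t → t ≤ 1 →
      ⟪z - p, x - p⟫ ≤ α * (h x - h p) + t * (‖x - p‖ ^ 2 / 2) := by
    intro t ht ht1
    have h1 := hprox z (p + t • (x - p))
    rw [hp] at h1
    have hconv : h (p + t • (x - p)) ≤ (1 - t) * h p + t * h x := by
      have hcv := hconvh.2 (Set.mem_univ p) (Set.mem_univ x)
        (by linarith : (0:ℝ) ≤ 1 - t) (le_of_lt ht) (by ring)
      have heq : p + t • (x - p) = (1 - t) • p + t • x := by module
      rw [heq]; exact hcv
    have hnorm : ‖p + t • (x - p) - z‖ ^ 2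
        = ‖p - z‖ ^ 2 + 2 * (t * ⟪p - z, x - p⟫) + t ^ 2 * ‖x - p‖ ^ 2 := by
      have heq : p + t • (x - p) - z = (p - z) + t • (x - p) := by abel
      rw [heq, norm_add_sq_real, real_inner_smul_right, norm_smul, Real.norm_eq_abs,
        mul_pow, sq_abs]
    rw [hnorm] at h1
    have h2 : 0 ≤ t * (h x - h p)
        + 1 / (2 * α) * (2 * (t * ⟪p - z, x - p⟫) + t ^ 2 * ‖x - p‖ ^ 2) := by
      nlinarith [h1, hconv]
    have h5 := mul_nonneg (by linarith : (0:ℝ) ≤ 2 * α) h2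
    have hc : 2 * α * (1 / (2 * α)) = 1 := by field_simp
    have h6 : 0 ≤ 2 * α * (t * (h x - h p))
        + (2 * (t * ⟪p - z, x - p⟫) + t ^ 2 * ‖x - p‖ ^ 2) := by
      have hrw : 2 * α * (t * (h x - h p)
            + 1 / (2 * α) * (2 * (t * ⟪p - z, x - p⟫) + t ^ 2 * ‖x - p‖ ^ 2))
          = 2 * α * (t * (h x - h p))
            + (2 * α * (1 / (2 * α))) * (2 * (t * ⟪p - z, x - p⟫) + t ^ 2 * ‖x - p‖ ^ 2) := by
        ring
      rw [hrw, hc, one_mul] at h5; exact h5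
    have h7 : 0 ≤ t * (2 * α * (h x - h p) + 2 * ⟪p - z, x - p⟫ + t * ‖x - p‖ ^ 2) := by
      nlinarith [h6]
    have h8 : 0 ≤ 2 * α * (h x - h p) + 2 * ⟪p - z, x - p⟫ + t * ‖x - p‖ ^ 2 :=
      nonneg_of_mul_nonneg_right h7 ht
    have hip : ⟪z - p, x - p⟫ = - ⟪p - z, x - p⟫ := by
      rw [← inner_neg_left]; congr 1; abel
    rw [hip]
    nlinarith [h8]
  refine le_of_forall_pos_le_add fun ε hε => ?_
  have hNnn : (0:ℝ) ≤ ‖x - p‖ ^ 2 / 2 := by positivity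
  set D := ‖x - p‖ ^ 2 / 2 with hD
  set t := min 1 (ε / (D + 1)) with htdef
  have ht : 0 < t := lt_min one_pos (by positivity)
  have ht1 : t ≤ 1 := min_le_left _ _
  have hbnd : t * D ≤ ε := by
    have h1 : t ≤ ε / (D + 1) := min_le_right _ _
    have h2 := mul_le_mul_of_nonneg_right h1 hNnn
    have h3 : ε / (D + 1) * D ≤ ε := by
      rw [div_mul_eq_mul_div, div_le_iff₀ (by linarith)]
      nlinarith
    linarith
  have hk := key t ht ht1
  linarith

lemma prox_nonexpansive {h : E → ℝ} (hconvh : ConvexOn ℝ Set.univ h)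
    {α : ℝ} (hα : 0 < α) {prox : E → E}
    (hprox : ∀ z x, h (prox z) + 1 / (2 * α) * ‖prox z - z‖ ^ 2
      ≤ h x + 1 / (2 * α) * ‖x - z‖ ^ 2) (z w : E) :
    ‖prox z - prox w‖ ≤ ‖z - w‖ := by
  set p := prox z with hp
  set q := prox w with hq
  have h1 := prox_variational hconvh hα hprox z q
  have h2 := prox_variational hconvh hα hprox w p
  rw [← hp] at h1
  rw [← hq] at h2
  have hsum : ⟪z - p, q - p⟫ + ⟪w - q, p - q⟫ ≤ 0 := by linarith
  have hcomm : ⟪q, p⟫ = ⟪p, q⟫ := real_inner_comm _ _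
  have e1 : ⟪z - p, q - p⟫ = ⟪z, q⟫ - ⟪z, p⟫ - ⟪p, q⟫ + ⟪p, p⟫ := by
    simp only [inner_sub_left, inner_sub_right]; ring
  have e2 : ⟪w - q, p - q⟫ = ⟪w, p⟫ - ⟪w, q⟫ - ⟪q, p⟫ + ⟪q, q⟫ := by
    simp only [inner_sub_left, inner_sub_right]; ring
  have e3 : ⟪z - w, p - q⟫ = ⟪z, p⟫ - ⟪z, q⟫ - ⟪w, p⟫ + ⟪w, q⟫ := by
    simp only [inner_sub_left, inner_sub_right]; ring
  have e4 : ‖p - q‖ ^ 2 = ⟪p, p⟫ - ⟪p, q⟫ - ⟪q, p⟫ + ⟪q, q⟫ := by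
    rw [← real_inner_self_eq_norm_sq]
    simp only [inner_sub_left, inner_sub_right]; ring
  have hkey : ‖p - q‖ ^ 2 ≤ ⟪z - w, p - q⟫ := by
    rw [e1, e2] at hsum; rw [e3, e4]; linarith
  have hcs : ⟪z - w, p - q⟫ ≤ ‖z - w‖ * ‖p - q‖ := real_inner_le_norm _ _
  rcases eq_or_lt_of_le (norm_nonneg (p - q)) with hz | hz
  · rw [← hz]; exact norm_nonneg _
  · have hmul : ‖p - q‖ * ‖p - q‖ ≤ ‖z - w‖ * ‖p - q‖ := by nlinarith [hkey, hcs]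
    exact le_of_mul_le_mul_right hmul hz

end Prox


/-- Key inequality of Theorem 3.4: with `x_{k+1} = prox_{αₖ h}(xₖ - αₖ gₖ)`,
`x̂_{k+1} = prox_{αₖ h}(xₖ - αₖ ∇f(xₖ))` and `𝔼ₖ[gₖ] = ∇f(xₖ)`, one has
`𝔼ₖ[(∇f(xₖ)-gₖ)ᵀ(x_{k+1}-xₖ)] ≤ αₖ 𝔼ₖ[‖∇f(xₖ)-gₖ‖²]`. -/
theorem stmt_10 {n : ℕ} {Ω : Type*} [MeasurableSpace Ω] (P : Measure Ω)
    [IsProbabilityMeasure P] (m : MeasurableSpace Ω) (hm : m ≤ ‹MeasurableSpace Ω›)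
    (h : EuclideanSpace ℝ (Fin n) → ℝ)
    (hconvh : ConvexOn ℝ Set.univ h) (hlsch : LowerSemicontinuous h)
    (αk : ℝ) (hαk : 0 < αk)
    (prox : EuclideanSpace ℝ (Fin n) → EuclideanSpace ℝ (Fin n))
    (hprox : ∀ z x, h (prox z) + 1 / (2 * αk) * ‖prox z - z‖ ^ 2
      ≤ h x + 1 / (2 * αk) * ‖x - z‖ ^ 2)
    (xk gradfk : EuclideanSpace ℝ (Fin n))
    (G : Ω → EuclideanSpace ℝ (Fin n)) (hG2 : MemLp G 2 P)
    (hunbiased : P[G|m] =ᵐ[P] fun _ => gradfk)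
    (X : Ω → EuclideanSpace ℝ (Fin n))
    (hX : X = fun ω => prox (xk - αk • G ω))
    (xhat : EuclideanSpace ℝ (Fin n)) (hxhat : xhat = prox (xk - αk • gradfk))
    (hint : Integrable (fun ω => ⟪gradfk - G ω, X ω - xk⟫) P) :
    ∀ᵐ ω ∂P,
      (P[fun ω => ⟪gradfk - G ω, X ω - xk⟫|m]) ω
        ≤ αk * (P[fun ω => ‖gradfk - G ω‖ ^ 2|m]) ω := by
  rename_i m0 hprob
  by_cases hle : m ≤ m0
  swap
  · rw [condExp_of_not_le hle, condExp_of_not_le hle]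
    filter_upwards with ω
    simp
  letI : MeasurableSpace Ω := m0
  have hD2 : MemLp (fun ω => gradfk - G ω) 2 P := (memLp_const gradfk).sub hG2
  have hDint : Integrable (fun ω => gradfk - G ω) P := hD2.integrable one_le_two
  have hGint : Integrable G P := hG2.integrable one_le_two
  set v := xhat - xk with hv
  have hf2int : Integrable (fun ω => ⟪gradfk - G ω, v⟫) P := hDint.inner_const v
  have hbint : Integrable (fun ω => ‖gradfk - G ω‖ ^ 2) P := hD2.norm.integrable_sq
  have hdecomp : ∀ ω : Ω, ⟪gradfk - G ω, X ω - xk⟫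
      = ⟪gradfk - G ω, X ω - xhat⟫ + ⟪gradfk - G ω, v⟫ := by
    intro ω
    rw [← inner_add_right]
    congr 1
    rw [hv]; abel
  -- pointwise domination
  have hbound : ∀ ω : Ω, ⟪gradfk - G ω, X ω - xk⟫
      ≤ αk * ‖gradfk - G ω‖ ^ 2 + ⟪gradfk - G ω, v⟫ := by
    intro ω
    rw [hdecomp ω]
    have h1 : ⟪gradfk - G ω, X ω - xhat⟫ ≤ ‖gradfk - G ω‖ * ‖X ω - xhat‖ :=
      real_inner_le_norm _ _
    have h2 : ‖X ω - xhat‖ ≤ αk * ‖gradfk - G ω‖ := by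
      rw [hX, hxhat]
      have hne := prox_nonexpansive hconvh hαk hprox (xk - αk • G ω) (xk - αk • gradfk)
      have heq : (xk - αk • G ω) - (xk - αk • gradfk) = αk • (gradfk - G ω) := by module
      rw [heq, norm_smul, Real.norm_eq_abs, abs_of_pos hαk] at hne
      exact hne
    nlinarith [norm_nonneg (gradfk - G ω), norm_nonneg (X ω - xhat), h1, h2]
  have hsumint : Integrable (fun ω => αk * ‖gradfk - G ω‖ ^ 2 + ⟪gradfk - G ω, v⟫) P :=
    (hbint.const_mul αk).add hf2int
  have hcm := condExp_mono (μ := P) (m := m) hint hsumint (Filter.Eventually.of_forall hbound)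
  have hadd : P[fun ω => αk * ‖gradfk - G ω‖ ^ 2 + ⟪gradfk - G ω, v⟫|m]
      =ᵐ[P] P[fun ω => αk * ‖gradfk - G ω‖ ^ 2|m] + P[fun ω => ⟪gradfk - G ω, v⟫|m] :=
    condExp_add (hbint.const_mul αk) hf2int m
  have hsmul : P[fun ω => αk * ‖gradfk - G ω‖ ^ 2|m]
      =ᵐ[P] αk • P[fun ω => ‖gradfk - G ω‖ ^ 2|m] := by
    have : (fun ω => αk * ‖gradfk - G ω‖ ^ 2) = αk • (fun ω => ‖gradfk - G ω‖ ^ 2) := rfl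
    rw [this]
    exact condExp_smul αk _ m
  haveI : SigmaFinite (P.trim hle) := inferInstance
  have hzero : P[fun ω => ⟪gradfk - G ω, v⟫|m] =ᵐ[P] fun _ => (0:ℝ) := by
    refine (ae_eq_condExp_of_forall_setIntegral_eq hle hf2int
      (fun s _ _ => (integrable_const (0:ℝ)).integrableOn)
      (fun s hs hμs => ?_) (StronglyMeasurable.aestronglyMeasurable (stronglyMeasurable_const (b := (0:ℝ))))).symm
    have hcond := setIntegral_condExp (μ := P) hle hGint hs
    have hcongr := setIntegral_congr_ae (μ := P) (f := P[G|m]) (g := fun _ => gradfk)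
      (hle s hs) (hunbiased.mono fun ω hω _ => hω)
    have hGset : ∫ ω in s, G ω ∂P = (P s).toReal • gradfk := by
      rw [← hcond, hcongr, setIntegral_const, Measure.real]
    have hDzero : ∫ ω in s, (gradfk - G ω) ∂P = 0 := by
      rw [integral_sub ((integrable_const (μ := P) gradfk).integrableOn) hGint.integrableOn]
      rw [hGset, setIntegral_const, Measure.real, sub_self]
    have : ∫ ω in s, ⟪gradfk - G ω, v⟫ ∂P = ⟪v, ∫ ω in s, (gradfk - G ω) ∂P⟫ := by
      rw [← integral_inner (μ := P.restrict s) hDint.integrableOn v]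
      exact integral_congr_ae (Filter.Eventually.of_forall fun ω => real_inner_comm _ _)
    rw [integral_zero, this, hDzero, inner_zero_right]
  filter_upwards [hcm, hadd, hzero, hsmul] with ω h1 h2 h3 h4
  have := h1
  rw [h2, Pi.add_apply, h3, h4] at this
  simpa using this
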